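/- Let p, q ∈ (1,∞) and 0 < α < 1. Then ∫_α^∞ |sin_p(x)/x|^q dx ≤ (sin_p(α)/α)^q (1-α) + 1/(q-1). -/

import Mathlib

open Real

noncomputable def pi_p (p : ℝ) : ℝ := 2 * π / (p * Real.sin (π / p))

noncomputable def Fp (p y : ℝ) : ℝ := ∫ t in (0:ℝ)..y, (1 - t ^ p) ^ (-(1/p) : ℝ)

section aux

variable {p : ℝ}

lemma fp_nonneg (hp : 1 < p) {t : ℝ} (ht0 : 0 ≤ t) (ht1 : t ≤ 1) :
    (0:ℝ) ≤ (1 - t ^ p) ^ (-(1/p) : ℝ) := by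
  apply Real.rpow_nonneg
  have : t ^ p ≤ 1 := Real.rpow_le_one ht0 ht1 (by linarith)
  linarith

lemma fp_ge_one (hp : 1 < p) {t : ℝ} (ht0 : 0 ≤ t) (ht1 : t < 1) :
    (1:ℝ) ≤ (1 - t ^ p) ^ (-(1/p) : ℝ) := by
  have hpos : 0 < 1 - t ^ p := by
    have : t ^ p < 1 := Real.rpow_lt_one ht0 ht1 (by linarith)
    linarith
  have hnn : 0 ≤ t ^ p := Real.rpow_nonneg ht0 p
  have := Real.rpow_le_rpow_of_nonpos hpos (by linarith : 1 - t ^ p ≤ 1)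
    (neg_nonpos.mpr (by positivity) : -(1/p) ≤ 0)
  rwa [Real.one_rpow] at this

lemma fp_mono (hp : 1 < p) {t s : ℝ} (ht0 : 0 ≤ t) (hts : t ≤ s) (hs1 : s < 1) :
    (1 - t ^ p) ^ (-(1/p) : ℝ) ≤ (1 - s ^ p) ^ (-(1/p) : ℝ) := by
  have hp0 : (0:ℝ) < p := by linarith
  have hpos : 0 < 1 - s ^ p := by
    have : s ^ p < 1 := Real.rpow_lt_one (le_trans ht0 hts) hs1 hp0
    linarith
  have hle : 1 - s ^ p ≤ 1 - t ^ p := by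
    have : t ^ p ≤ s ^ p := Real.rpow_le_rpow ht0 hts hp0.le
    linarith
  exact Real.rpow_le_rpow_of_nonpos hpos hle (neg_nonpos.mpr (by positivity) : -(1/p) ≤ 0)

lemma fp_contOn (hp : 1 < p) {a b : ℝ} (ha : 0 ≤ a) (hb : b < 1) :
    ContinuousOn (fun t : ℝ => (1 - t ^ p) ^ (-(1/p) : ℝ)) (Set.Icc a b) := by
  have hp0 : (0:ℝ) < p := by linarith
  have h1 : ContinuousOn (fun t : ℝ => 1 - t ^ p) (Set.Icc a b) :=
    continuousOn_const.sub (continuousOn_id.rpow_const (fun x _ => Or.inr hp0.le))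
  apply h1.rpow_const
  intro t ht
  left
  have : t ^ p < 1 := Real.rpow_lt_one (le_trans ha ht.1) (lt_of_le_of_lt ht.2 hb) hp0
  linarith

lemma fp_intble (hp : 1 < p) {a b : ℝ} (ha : 0 ≤ a) (hab : a ≤ b) (hb : b < 1) :
    IntervalIntegrable (fun t : ℝ => (1 - t ^ p) ^ (-(1/p) : ℝ))
      MeasureTheory.volume a b := by
  apply ContinuousOn.intervalIntegrable
  rw [Set.uIcc_of_le hab]
  exact fp_contOn hp ha hb

/-- `Fp p a ≤ a * f a` for `0 ≤ a < 1`. -/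
lemma Fp_le (hp : 1 < p) {a : ℝ} (ha : 0 ≤ a) (ha1 : a < 1) :
    Fp p a ≤ a * (1 - a ^ p) ^ (-(1/p) : ℝ) := by
  have h := intervalIntegral.integral_mono_on (μ := MeasureTheory.volume) ha
    (fp_intble hp le_rfl ha ha1) intervalIntegrable_const
    (g := fun _ => (1 - a ^ p) ^ (-(1/p) : ℝ))
    (fun t ht => fp_mono hp ht.1 ht.2 ha1)
  rw [intervalIntegral.integral_const, smul_eq_mul, sub_zero] at h
  exact h

/-- `(s - a) * f a ≤ Fp p s - Fp p a` for `0 ≤ a ≤ s < 1`. -/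
lemma Fp_sub_ge (hp : 1 < p) {a s : ℝ} (ha : 0 ≤ a) (has : a ≤ s) (hs1 : s < 1) :
    (s - a) * (1 - a ^ p) ^ (-(1/p) : ℝ) ≤ Fp p s - Fp p a := by
  have hadd : Fp p a + ∫ t in a..s, (1 - t ^ p) ^ (-(1/p) : ℝ) = Fp p s :=
    intervalIntegral.integral_add_adjacent_intervals
      (fp_intble hp le_rfl ha (lt_of_le_of_lt has hs1)) (fp_intble hp ha has hs1)
  have h := intervalIntegral.integral_mono_on (μ := MeasureTheory.volume) has
    intervalIntegrable_const (fp_intble hp ha has hs1)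
    (f := fun _ => (1 - a ^ p) ^ (-(1/p) : ℝ))
    (fun t ht => fp_mono hp ha ht.1 (lt_of_le_of_lt ht.2 hs1))
  rw [intervalIntegral.integral_const, smul_eq_mul] at h
  linarith

/-- key : `s * Fp p a ≤ a * Fp p s` for `0 ≤ a ≤ s < 1`. -/
lemma key_ineq (hp : 1 < p) {a s : ℝ} (ha : 0 ≤ a) (has : a ≤ s) (hs1 : s < 1) :
    s * Fp p a ≤ a * Fp p s := by
  have h1 := Fp_le hp ha (lt_of_le_of_lt has hs1)
  have h2 := Fp_sub_ge hp ha has hs1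
  nlinarith [mul_le_mul_of_nonneg_left h2 ha,
    mul_le_mul_of_nonneg_left h1 (sub_nonneg.mpr has)]

/-- `Fp p 1` is not in `(0,1)`. -/
lemma Fp_one_not_small (hp : 1 < p) {x : ℝ} (hFp : Fp p 1 = x) (hx0 : 0 < x) (hx1 : x < 1) :
    False := by
  by_cases hi : IntervalIntegrable (fun t : ℝ => (1 - t ^ p) ^ (-(1/p) : ℝ))
      MeasureTheory.volume 0 1
  · set d : ℝ := (x + 1) / 2 with hd
    have hd0 : 0 ≤ d := by positivity
    have hd1 : d < 1 := by rw [hd]; linarith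
    have hxd : x < d := by rw [hd]; linarith
    have hi2 : IntervalIntegrable (fun t : ℝ => (1 - t ^ p) ^ (-(1/p) : ℝ))
        MeasureTheory.volume d 1 := hi.mono_set (by rw [Set.uIcc_of_le hd1.le,
          Set.uIcc_of_le (by norm_num : (0:ℝ) ≤ 1)]; exact Set.Icc_subset_Icc hd0 le_rfl)
    have hadd : Fp p d + ∫ t in d..(1:ℝ), (1 - t ^ p) ^ (-(1/p) : ℝ) = Fp p 1 :=
      intervalIntegral.integral_add_adjacent_intervals (fp_intble hp le_rfl hd0 hd1) hi2
    have h1 : d ≤ Fp p d := by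
      have h := intervalIntegral.integral_mono_on (μ := MeasureTheory.volume) hd0
        intervalIntegrable_const (fp_intble hp le_rfl hd0 hd1)
        (f := fun _ => (1:ℝ))
        (fun t ht => fp_ge_one hp ht.1 (lt_of_le_of_lt ht.2 hd1))
      rw [intervalIntegral.integral_const, smul_eq_mul, sub_zero, mul_one] at h
      exact h
    have h2 : 0 ≤ ∫ t in d..(1:ℝ), (1 - t ^ p) ^ (-(1/p) : ℝ) := by
      apply intervalIntegral.integral_nonneg hd1.le
      intro t ht
      exact fp_nonneg hp (le_trans hd0 ht.1) ht.2
    linarith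
  · have : Fp p 1 = 0 := intervalIntegral.integral_undef hi
    rw [hFp] at this
    linarith

end aux

theorem tail_integral_bound_lt_one (p q : ℝ) (hp : 1 < p) (hq : 1 < q)
    (sinp : ℝ → ℝ)
    (hbase : ∀ x ∈ Set.Icc 0 (pi_p p / 2),
      sinp x ∈ Set.Icc (0:ℝ) 1 ∧ Fp p (sinp x) = x)
    (hodd : ∀ x, sinp (-x) = - sinp x)
    (hrefl : ∀ x, sinp (pi_p p / 2 - x) = sinp (pi_p p / 2 + x))
    (α : ℝ) (hα0 : 0 < α) (hα1 : α < 1) :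
    ∫ x in Set.Ioi α, |sinp x / x| ^ q ≤
      (sinp α / α) ^ q * (1 - α) + 1 / (q - 1) := by
  have hp0 : (0:ℝ) < p := by linarith
  set P := pi_p p with hPdef
  -- `1 < P / 2`
  have hP2 : 1 < P / 2 := by
    have hsinpos : 0 < Real.sin (π / p) :=
      Real.sin_pos_of_pos_of_lt_pi (by positivity) (div_lt_self Real.pi_pos hp)
    have hsinlt : Real.sin (π / p) < π / p := Real.sin_lt (by positivity)
    have hlt : p * Real.sin (π / p) < π := by
      calc p * Real.sin (π / p) < p * (π / p) := by
            exact mul_lt_mul_of_pos_left hsinlt hp0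
        _ = π := by field_simp
    have hhalf : P / 2 = π / (p * Real.sin (π / p)) := by
      rw [hPdef, pi_p]; ring
    rw [hhalf]
    exact (one_lt_div (by positivity)).mpr hlt
  have hP0 : 0 < P := by linarith
  -- basic values on `[0, P/2]`
  have hmem : ∀ x : ℝ, 0 ≤ x → x ≤ 1 → x ∈ Set.Icc 0 (P / 2) :=
    fun x h0 h1 => ⟨h0, by linarith⟩
  obtain ⟨⟨ha0, ha1⟩, hFa⟩ := hbase α (hmem α hα0.le hα1.le)
  -- sinc bound on `(α, 1)`
  have hsinc : ∀ x : ℝ, α ≤ x → x < 1 → sinp x / x ≤ sinp α / α := by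
    intro x hax hx1
    have hx0 : 0 < x := lt_of_lt_of_le hα0 hax
    obtain ⟨⟨hs0, hs1⟩, hFs⟩ := hbase x (hmem x hx0.le hx1.le)
    have hs1' : sinp x < 1 := by
      rcases lt_or_eq_of_le hs1 with h | h
      · exact h
      · exact absurd (h ▸ hFs) (fun hh => Fp_one_not_small hp hh hx0 hx1)
    rw [div_le_div_iff₀ hx0 hα0]
    rcases le_total (sinp x) (sinp α) with h | h
    · calc sinp x * α ≤ sinp α * α := by nlinarith
        _ ≤ sinp α * x := by nlinarith
    · have := key_ineq hp ha0 h hs1'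
      rw [hFa, hFs] at this
      linarith
  -- global bound `|sinp x| ≤ 1`
  have h1 : ∀ x : ℝ, -(P/2) ≤ x → x ≤ P/2 → |sinp x| ≤ 1 := by
    intro x hxl hxr
    rcases le_total 0 x with h | h
    · obtain ⟨⟨h0, h1⟩, _⟩ := hbase x ⟨h, hxr⟩
      rw [abs_of_nonneg h0]; exact h1
    · have hx : sinp x = - sinp (-x) := by
        have := hodd (-x); rw [neg_neg] at this; linarith
      obtain ⟨⟨h0, h1⟩, _⟩ := hbase (-x) ⟨by linarith, by linarith⟩
      rw [hx, abs_neg, abs_of_nonneg h0]; exact h1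
  have hrefl' : ∀ x : ℝ, sinp x = sinp (P - x) := by
    intro x
    have h := hrefl (x - P / 2)
    rw [show P/2 - (x - P/2) = P - x by ring, show P/2 + (x - P/2) = x by ring] at h
    exact h.symm
  have hper : Function.Periodic sinp (2 * P) := by
    intro x
    have e1 : sinp (x + 2*P) = sinp (-(x + P)) := by
      rw [hrefl' (x + 2*P), show P - (x + 2*P) = -(x+P) by ring]
    have e2 : sinp (x + P) = - sinp x := by
      rw [hrefl' (x + P), show P - (x + P) = -x by ring, hodd x]
    rw [e1, hodd (x + P), e2, neg_neg]
  have hone : ∀ x : ℝ, |sinp x| ≤ 1 := by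
    intro x
    obtain ⟨y, hy, hxy⟩ := hper.exists_mem_Ico (by linarith) x (-(P/2))
    rw [hxy]
    rcases le_total y (P/2) with h | h
    · exact h1 y hy.1 h
    · rw [hrefl' y]
      have := hy.2
      exact h1 (P - y) (by linarith) (by linarith)
  -- nonnegativity of the constant
  have hCnn : 0 ≤ (sinp α / α) ^ q := Real.rpow_nonneg (div_nonneg ha0 hα0.le) q
  have hRHS : 0 ≤ (sinp α / α) ^ q * (1 - α) + 1 / (q - 1) := by
    have : (0:ℝ) ≤ 1 / (q - 1) := le_of_lt (div_pos one_pos (by linarith))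
    nlinarith
  by_cases hint : MeasureTheory.IntegrableOn (fun x => |sinp x / x| ^ q)
      (Set.Ioi α) MeasureTheory.volume
  swap
  · rw [MeasureTheory.integral_undef (by rwa [MeasureTheory.IntegrableOn] at hint)]
    exact hRHS
  -- split the integral
  have hsplit : Set.Ioi α = Set.Ioc α 1 ∪ Set.Ioi 1 := (Set.Ioc_union_Ioi_eq_Ioi hα1.le).symm
  have hi1 : MeasureTheory.IntegrableOn (fun x => |sinp x / x| ^ q)
      (Set.Ioc α 1) MeasureTheory.volume :=
    hint.mono_set (Set.Ioc_subset_Ioi_self)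
  have hi2 : MeasureTheory.IntegrableOn (fun x => |sinp x / x| ^ q)
      (Set.Ioi 1) MeasureTheory.volume :=
    hint.mono_set (fun x hx => lt_trans hα1 hx)
  rw [hsplit, MeasureTheory.setIntegral_union (Set.Ioc_disjoint_Ioi le_rfl)
    measurableSet_Ioi hi1 hi2]
  have piece1 : ∫ x in Set.Ioc α 1, |sinp x / x| ^ q ≤ (sinp α / α) ^ q * (1 - α) := by
    rw [MeasureTheory.integral_Ioc_eq_integral_Ioo]
    have hi1' : MeasureTheory.IntegrableOn (fun x => |sinp x / x| ^ q)
        (Set.Ioo α 1) MeasureTheory.volume := hi1.mono_set Set.Ioo_subset_Ioc_self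
    have hmono := MeasureTheory.setIntegral_mono_on hi1'
      ((MeasureTheory.integrableOn_const_iff enorm_ne_top).mpr (Or.inr (by
        rw [Real.volume_Ioo]; exact ENNReal.ofReal_lt_top)))
      measurableSet_Ioo
      (g := fun _ => (sinp α / α) ^ q)
      (fun x hx => by
        have hb := hsinc x hx.1.le hx.2
        have hx0 : 0 < x := lt_trans hα0 hx.1
        obtain ⟨⟨hs0, _⟩, _⟩ := hbase x (hmem x hx0.le hx.2.le)
        have habs : |sinp x / x| = sinp x / x := abs_of_nonneg (div_nonneg hs0 hx0.le)
        rw [habs]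
        exact Real.rpow_le_rpow (div_nonneg hs0 hx0.le) hb (by linarith))
    rw [MeasureTheory.setIntegral_const, Real.volume_real_Ioo_of_le hα1.le, smul_eq_mul] at hmono
    linarith [hmono]
  have piece2 : ∫ x in Set.Ioi (1:ℝ), |sinp x / x| ^ q ≤ 1 / (q - 1) := by
    have hiq : MeasureTheory.IntegrableOn (fun x : ℝ => x ^ (-q))
        (Set.Ioi (1:ℝ)) MeasureTheory.volume :=
      integrableOn_Ioi_rpow_of_lt (by linarith) one_pos
    have hmono := MeasureTheory.setIntegral_mono_on hi2 hiq measurableSet_Ioi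
      (fun x hx => by
        have hx1 : (1:ℝ) < x := hx
        have hx0 : (0:ℝ) < x := by linarith
        have hb : |sinp x / x| ≤ x⁻¹ := by
          rw [abs_div, abs_of_pos hx0]
          rw [div_le_iff₀ hx0, inv_mul_cancel₀ hx0.ne']
          exact hone x
        calc |sinp x / x| ^ q ≤ (x⁻¹) ^ q :=
              Real.rpow_le_rpow (abs_nonneg _) hb (by linarith)
          _ = x ^ (-q) := by
              rw [Real.inv_rpow hx0.le, ← Real.rpow_neg hx0.le])
    have hval : ∫ x in Set.Ioi (1:ℝ), x ^ (-q) = 1 / (q - 1) := by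
      rw [integral_Ioi_rpow_of_lt (by linarith) one_pos]
      rw [Real.one_rpow]
      rw [div_eq_div_iff (by linarith) (by linarith)]
      ring
    linarith [hmono, hval]
  linarith [piece1, piece2]
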